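/- Let Ã ∈ ℂ^{n×n}, B̃ ∈ ℂ^{n×q}, and C̃′ ∈ ℂ^{m×n}, and let X′ ⊆ {1,…,n} contain the indices of all nonzero columns of C̃′. Let C̃ ∈ ℂ^{|X′|×n} be the matrix whose rows are the standard basis row vectors e_i^T for i ∈ X′. Then for every s ∈ ℂ, if the matrix [[Ã−sI_n, B̃],[C̃′, 0]] has rank n+q, then the matrix [[Ã−sI_n, B̃],[C̃, 0]] also has rank n+q. (Replacing an arbitrary output matrix by dedicated sensors on the set of measured states preserves full column rank of the Rosenbrock matrix.) -/
import Mathlib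

open Matrix

lemma rank_eq_card_iff_ker {α β : Type*} [Fintype α] [Fintype β] [DecidableEq β]
    (M : Matrix α β ℂ) :
    M.rank = Fintype.card β ↔ LinearMap.ker M.mulVecLin = ⊥ := by
  have hadd := LinearMap.finrank_range_add_finrank_ker M.mulVecLin
  rw [Module.finrank_pi] at hadd
  unfold Matrix.rank
  constructor
  · intro hr
    have : Module.finrank ℂ (LinearMap.ker M.mulVecLin) = 0 := by omega
    exact Submodule.finrank_eq_zero.mp this
  · intro hk
    rw [hk] at hadd
    simp at hadd
    omega

/-- Replacing an arbitrary output matrix `C'` by dedicated sensors (standard basis row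
vectors) on a set `X` of states containing all states measured by `C'` (i.e. all
indices of nonzero columns of `C'`) preserves full column rank of the Rosenbrock
matrix. -/
theorem dedicated_sensors_preserve_Rosenbrock_rank (n q m : ℕ)
    (A : Matrix (Fin n) (Fin n) ℂ) (B : Matrix (Fin n) (Fin q) ℂ)
    (C' : Matrix (Fin m) (Fin n) ℂ) (X : Finset (Fin n))
    (hX : ∀ j : Fin n, (∃ i : Fin m, C' i j ≠ 0) → j ∈ X) (s : ℂ)
    (h : (Matrix.fromBlocks (A - s • (1 : Matrix (Fin n) (Fin n) ℂ)) B C' 0).rank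
      = n + q) :
    (Matrix.fromBlocks (A - s • (1 : Matrix (Fin n) (Fin n) ℂ)) B
        (Matrix.of fun (i : {x // x ∈ X}) (j : Fin n) => if (i : Fin n) = j then (1 : ℂ) else 0)
        0).rank = n + q := by
  set As := A - s • (1 : Matrix (Fin n) (Fin n) ℂ)
  set C : Matrix {x // x ∈ X} (Fin n) ℂ :=
    Matrix.of fun (i : {x // x ∈ X}) (j : Fin n) => if (i : Fin n) = j then (1 : ℂ) else 0
  have hcard : Fintype.card (Fin n ⊕ Fin q) = n + q := by simp
  rw [← hcard] at h ⊢
  rw [rank_eq_card_iff_ker] at h ⊢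
  rw [Submodule.eq_bot_iff] at h ⊢
  intro v hv
  apply h
  rw [LinearMap.mem_ker, mulVecLin_apply, fromBlocks_mulVec] at hv ⊢
  -- decompose hv
  have h1 : As *ᵥ (v ∘ Sum.inl) + B *ᵥ (v ∘ Sum.inr) = 0 := by
    funext i; exact congrFun hv (Sum.inl i)
  have h2 : C *ᵥ (v ∘ Sum.inl) + (0 : Matrix _ (Fin q) ℂ) *ᵥ (v ∘ Sum.inr) = 0 := by
    funext i; exact congrFun hv (Sum.inr i)
  have hx : ∀ j ∈ X, v (Sum.inl j) = 0 := by
    intro j hj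
    have := congrFun h2 ⟨j, hj⟩
    simpa [C, mulVec, dotProduct, Function.comp] using this
  have hC' : C' *ᵥ (v ∘ Sum.inl) = 0 := by
    funext i
    simp only [mulVec, dotProduct, Pi.zero_apply]
    apply Finset.sum_eq_zero
    intro j _
    by_cases hj : j ∈ X
    · simp [Function.comp, hx j hj]
    · have : C' i j = 0 := by
        by_contra hne
        exact hj (hX j ⟨i, hne⟩)
      simp [this]
  funext i
  cases i with
  | inl i => exact congrFun h1 i
  | inr i => simpa using congrFun hC' i
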